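/- Let m, d, N be positive integers, F : ℝ^m → ℝ^{m×d} any matrix-valued map, and λ > 0. Let ζ_1, …, ζ_N > 0 be weights and n_1, …, n_N ∈ ℝ^d be vectors satisfying the closed-surface condition Σ_{j=1}^N ζ_j n_j = 0, and set S = Σ_{j=1}^N ζ_j. Define the multi-dimensional local Lax–Friedrichs flux F̂_λ(U_L, U_R, n) = ½(F(U_L) + F(U_R)) n − (λ/2)(U_R − U_L) ∈ ℝ^m. Then for any states U_1, …, U_N ∈ ℝ^m, the intermediate state U* = (1/S) Σ_{j=1}^N ζ_j [U_j − (1/λ) F(U_j) n_j] satisfies Σ_{j=1}^N ζ_j F̂_λ(U_j, U*, −n_j) = 0. -/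
import Mathlib


open Matrix

/-- The multi-dimensional local Lax–Friedrichs numerical flux in direction
`n ∈ ℝ^d` with dissipation coefficient `lam`, for a matrix-valued flux map
`F : ℝ^m → ℝ^{m×d}`:
`F̂(U_L, U_R, n) = ½(F U_L + F U_R) n − (lam/2)(U_R − U_L)`. -/
noncomputable def llfFluxMD {m d : ℕ} (F : (Fin m → ℝ) → Matrix (Fin m) (Fin d) ℝ)
    (lam : ℝ) (UL UR : Fin m → ℝ) (n : Fin d → ℝ) : Fin m → ℝ :=
  (1 / 2 : ℝ) • ((F UL + F UR).mulVec n) - (lam / 2) • (UR - UL)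

/-- for positive weights `ζ_j` and directions `n_j` satisfying the
closed-surface condition `Σ ζ_j n_j = 0`, the intermediate state
`U* = (1/S) Σ ζ_j [U_j − (1/λ) F(U_j) n_j]` (with `S = Σ ζ_j`) satisfies
`Σ_j ζ_j F̂_λ(U_j, U*, −n_j) = 0`. -/
theorem multiD_intermediate_state_flux_cancellation
    (m d N : ℕ) (hm : 0 < m) (hd : 0 < d) (hN : 0 < N)
    (F : (Fin m → ℝ) → Matrix (Fin m) (Fin d) ℝ) (lam : ℝ) (hlam : 0 < lam)
    (ζ : Fin N → ℝ) (hζ : ∀ j, 0 < ζ j)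
    (n : Fin N → Fin d → ℝ) (hclosed : ∑ j, ζ j • n j = 0)
    (S : ℝ) (hS : S = ∑ j, ζ j)
    (U : Fin N → Fin m → ℝ)
    (Ustar : Fin m → ℝ)
    (hUstar : Ustar =
      (1 / S) • ∑ j, ζ j • (U j - (1 / lam) • (F (U j)).mulVec (n j))) :
    ∑ j, ζ j • llfFluxMD F lam (U j) Ustar (-(n j)) = 0 := by
  have hNe : Nonempty (Fin N) := ⟨⟨0, hN⟩⟩
  have hSpos : 0 < S := by
    rw [hS]; exact Finset.sum_pos (fun j _ => hζ j) Finset.univ_nonempty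
  have hS0 : S ≠ 0 := ne_of_gt hSpos
  have hlam0 : lam ≠ 0 := ne_of_gt hlam
  set A := ∑ j, ζ j • (F (U j)).mulVec (n j) with hA
  set B := ∑ j, ζ j • U j with hB
  have hU2 : Ustar = (1 / S) • (B - (1 / lam) • A) := by
    rw [hUstar]
    congr 1
    rw [hB, hA, Finset.smul_sum, ← Finset.sum_sub_distrib]
    refine Finset.sum_congr rfl fun j _ => ?_
    rw [smul_sub, smul_comm]
  have hSU : S • Ustar = B - (1 / lam) • A := by
    rw [hU2, smul_smul]
    rw [mul_one_div, div_self hS0, one_smul]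
  have hFstar : ∑ j, ζ j • (F Ustar).mulVec (n j) = 0 := by
    have h1 : (F Ustar).mulVecLin (∑ j, ζ j • n j) =
        ∑ j, ζ j • (F Ustar).mulVec (n j) := by
      rw [map_sum]
      simp [Matrix.mulVecLin_apply]
    rw [← h1, hclosed, map_zero]
  have hexp : ∀ j : Fin N, ζ j • llfFluxMD F lam (U j) Ustar (-(n j)) =
      (-(1 / 2 : ℝ)) • (ζ j • (F (U j)).mulVec (n j))
        + (-(1 / 2 : ℝ)) • (ζ j • (F Ustar).mulVec (n j))
        + ((-(lam / 2)) • (ζ j • Ustar) + (lam / 2) • (ζ j • U j)) := by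
    intro j
    simp only [llfFluxMD, Matrix.add_mulVec, Matrix.mulVec_neg]
    module
  rw [Finset.sum_congr rfl (fun j _ => hexp j)]
  rw [Finset.sum_add_distrib, Finset.sum_add_distrib,
    ← Finset.smul_sum, ← Finset.smul_sum, Finset.sum_add_distrib,
    ← Finset.smul_sum, ← Finset.smul_sum,
    ← hA, hFstar, ← hB]
  have hsum : ∑ j, ζ j • Ustar = S • Ustar := by
    rw [hS, ← Finset.sum_smul]
  rw [hsum, hSU]
  have : lam • ((1 / lam) • A) = A := by
    rw [smul_smul, mul_one_div, div_self hlam0, one_smul]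
  rw [smul_sub]
  match_scalars <;> field_simp <;> ring
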